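/- The inner product (y − ȳ1_n)'(y + ε − ȳ1_n) equals ‖y − ȳ1_n‖²(1 + (a/(1+b))(1 − R²)). -/

import Mathlib

open Matrix BigOperators

/-- Euclidean norm of a vector in ℝⁿ. -/
noncomputable def nrm {n : ℕ} (v : Fin n → ℝ) : ℝ := Real.sqrt (v ⬝ᵥ v)

lemma nrm_sq {n : ℕ} (v : Fin n → ℝ) : (nrm v) ^ 2 = v ⬝ᵥ v := by
  rw [nrm, Real.sq_sqrt]
  exact Finset.sum_nonneg fun i _ => mul_self_nonneg _

lemma nrm_ne_zero {n : ℕ} {v : Fin n → ℝ} (hv : v ≠ 0) : nrm v ≠ 0 := by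
  intro h
  have h2 : v ⬝ᵥ v = 0 := by rw [← nrm_sq, h]; ring
  exact hv (dotProduct_self_eq_zero.mp h2)

/-- (y − ȳ1)'(y + ε − ȳ1) = ‖y − ȳ1‖²(1 + (a/(1+b))(1 − R²)). -/
theorem inner_product_perturbed {n p : ℕ} (X : Matrix (Fin n) (Fin (p + 1)) ℝ)
    (hX : IsUnit (Xᵀ * X).det)
    (hone : ∃ j, ∀ i, X i j = 1)
    (y e : Fin n → ℝ)
    (he : e = y - X.mulVec ((Xᵀ * X)⁻¹.mulVec (Xᵀ.mulVec y)))
    (he0 : e ≠ 0)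
    (ybar : ℝ) (hybar : ybar = (∑ i, y i) / (n : ℝ))
    (hy : y ≠ fun _ => ybar)
    (R2 : ℝ) (hR2 : R2 = 1 - (nrm e) ^ 2 / (nrm (y - fun _ => ybar)) ^ 2)
    (u : Fin n → ℝ) (hu0 : u ≠ 0)
    (hXu : Xᵀ.mulVec u = 0) (heu : e ⬝ᵥ u = 0)
    (a b : ℝ) (ha : a ≠ 0) (hb : 0 ≤ b)
    (ε : Fin n → ℝ)
    (hε : ε = (a * nrm e / (1 + b)) •
        ((nrm e)⁻¹ • e + Real.sqrt b • ((nrm u)⁻¹ • u))) :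
    (y - fun _ => ybar) ⬝ᵥ (y + ε - fun _ => ybar) =
      (nrm (y - fun _ => ybar)) ^ 2 * (1 + (a / (1 + b)) * (1 - R2)) := by
  have hbpos : (0:ℝ) < 1 + b := by linarith
  set w : Fin (p+1) → ℝ := (Xᵀ * X)⁻¹.mulVec (Xᵀ.mulVec y) with hw
  have hXe : Xᵀ.mulVec e = 0 := by
    rw [he, Matrix.mulVec_sub, hw, Matrix.mulVec_mulVec, Matrix.mulVec_mulVec,
      Matrix.mul_nonsing_inv _ hX, Matrix.one_mulVec, sub_self]
  have hye : y ⬝ᵥ e = e ⬝ᵥ e := by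
    have hyd : y = e + X.mulVec w := by rw [he]; ring
    calc y ⬝ᵥ e = e ⬝ᵥ e + e ⬝ᵥ X.mulVec w := by
          rw [hyd, add_dotProduct, dotProduct_comm (X.mulVec w)]
      _ = e ⬝ᵥ e := by
          rw [Matrix.dotProduct_mulVec, ← Matrix.mulVec_transpose, hXe,
            zero_dotProduct, add_zero]
  have hyu : y ⬝ᵥ u = 0 := by
    have hyd : y = e + X.mulVec w := by rw [he]; ring
    rw [hyd, add_dotProduct, heu, dotProduct_comm,
      Matrix.dotProduct_mulVec, ← Matrix.mulVec_transpose, hXu,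
      zero_dotProduct, add_zero]
  obtain ⟨j, hj⟩ := hone
  have h1e : (fun _ : Fin n => ybar) ⬝ᵥ e = 0 := by
    have h0 := congrFun hXe j
    simp only [Matrix.mulVec, dotProduct, Matrix.transpose_apply, hj,
      one_mul, Pi.zero_apply] at h0
    simp [dotProduct, ← Finset.mul_sum, h0]
  have h1u : (fun _ : Fin n => ybar) ⬝ᵥ u = 0 := by
    have h0 := congrFun hXu j
    simp only [Matrix.mulVec, dotProduct, Matrix.transpose_apply, hj,
      one_mul, Pi.zero_apply] at h0
    simp [dotProduct, ← Finset.mul_sum, h0]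
  set d : Fin n → ℝ := y - fun _ => ybar with hd
  have hde : d ⬝ᵥ e = e ⬝ᵥ e := by
    rw [hd, sub_dotProduct, hye, h1e, sub_zero]
  have hdu : d ⬝ᵥ u = 0 := by
    rw [hd, sub_dotProduct, hyu, h1u, sub_zero]
  have hd0 : d ≠ 0 := by
    intro h
    exact hy (sub_eq_zero.mp h)
  have hne : nrm e ≠ 0 := nrm_ne_zero he0
  have hnd : nrm d ≠ 0 := nrm_ne_zero hd0
  have hsplit : y + ε - (fun _ => ybar) = d + ε := by
    rw [hd]; ring
  have hdε : d ⬝ᵥ ε = a * (nrm e) ^ 2 / (1 + b) := by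
    rw [hε, dotProduct_smul, dotProduct_add, dotProduct_smul,
      dotProduct_smul, dotProduct_smul, hde, hdu, ← nrm_sq]
    simp only [smul_eq_mul]
    field_simp
    ring
  rw [hsplit, dotProduct_add, hdε, hR2]
  have hdd : d ⬝ᵥ d = (nrm d) ^ 2 := (nrm_sq d).symm
  rw [hdd]
  field_simp
  ring
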